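/- arXiv:1907.04687 — 6 statements merged into one kernel-verified Lean document; each statement's English description precedes it below -/
import Mathlib

section
/- For 0 < |q| < 1 and |z| < 1, the infinite product H_q(z) = ∏_{i=0}^∞ (1 - q^i z)^{-1} equals the sum ∑_{n=0}^∞ z^n / (q;q)_n, where (q;q)_n = ∏_{k=1}^n (1 - q^k) is the q-Pochhammer symbol. -/
open Finset Filter Topology

lemma aux_exp_le {t x : ℝ} (ht1 : t < 1) (hx0 : 0 ≤ x) (hxt : x ≤ t) :
    Real.exp (-(x / (1 - t))) ≤ 1 - x := by
  have h1t : 0 < 1 - t := by linarith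
  set y := x / (1 - t) with hy
  have hxy : x = y * (1 - t) := by rw [hy, div_mul_cancel₀ x h1t.ne']
  have hE := Real.add_one_le_exp y
  have hEpos := Real.exp_pos y
  have h1x : 0 < 1 - x := by linarith
  have hy0 : 0 ≤ y := div_nonneg hx0 h1t.le
  have key : 1 ≤ (1 - x) * Real.exp y := by nlinarith
  rw [Real.exp_neg, inv_le_comm₀ hEpos h1x, ← one_div, div_le_iff₀ h1x]
  linarith [key]

-- lower bound on real partial products
lemma aux_prod_lb {t : ℝ} (ht0 : 0 ≤ t) (ht1 : t < 1) (n : ℕ) :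
    Real.exp (-(t / ((1 - t) * (1 - t)))) ≤ ∏ k ∈ range n, (1 - t ^ (k + 1)) := by
  have h1t : 0 < 1 - t := by linarith
  have hsum : ∑ k ∈ range n, t ^ (k + 1) ≤ t / (1 - t) := by
    have h1 : ∑ k ∈ range n, t ^ (k + 1) = t * ∑ k ∈ range n, t ^ k := by
      rw [mul_sum]; exact sum_congr rfl fun k _ => by ring
    have h2 : ∑ k ∈ range n, t ^ k ≤ (1 - t)⁻¹ := by
      calc ∑ k ∈ range n, t ^ k ≤ ∑' k : ℕ, t ^ k :=
            Summable.sum_le_tsum _ (fun i _ => pow_nonneg ht0 i)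
              (summable_geometric_of_lt_one ht0 ht1)
        _ = (1 - t)⁻¹ := tsum_geometric_of_lt_one ht0 ht1
    rw [h1, div_eq_mul_inv]
    exact mul_le_mul_of_nonneg_left h2 ht0
  calc Real.exp (-(t / ((1 - t) * (1 - t))))
      ≤ Real.exp (-((∑ k ∈ range n, t ^ (k + 1)) / (1 - t))) := by
        apply Real.exp_le_exp.2
        rw [neg_le_neg_iff, div_le_div_iff₀ h1t (by positivity)]
        calc (∑ k ∈ range n, t ^ (k + 1)) * ((1 - t) * (1 - t))
            = ((∑ k ∈ range n, t ^ (k + 1)) * (1 - t)) * (1 - t) := by ring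
          _ ≤ (t / (1 - t) * (1 - t)) * (1 - t) := by
              apply mul_le_mul_of_nonneg_right _ h1t.le
              exact mul_le_mul_of_nonneg_right hsum h1t.le
          _ = t * (1 - t) := by field_simp
    _ = ∏ k ∈ range n, Real.exp (-(t ^ (k + 1) / (1 - t))) := by
        rw [← Real.exp_sum]
        congr 1
        simp only [neg_div, Finset.sum_div, Finset.sum_neg_distrib]
    _ ≤ ∏ k ∈ range n, (1 - t ^ (k + 1)) := by
        apply prod_le_prod (fun i _ => (Real.exp_pos _).le)
        intro i _
        exact aux_exp_le ht1 (pow_nonneg ht0 _) (pow_le_of_le_one ht0 ht1.le (Nat.succ_ne_zero i))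

/-- Euler's identity for the quantum exponential generating function:
for `0 < |q| < 1` and `|z| < 1`, `∏_{i≥0} (1 - qⁱ z)⁻¹ = ∑_{n≥0} zⁿ / (q;q)_n`,
where `(q;q)_n = ∏_{k=1}^n (1 - q^k)`. -/
theorem quantum_exponential_product_eq_sum (q z : ℂ)
    (hq0 : 0 < ‖q‖) (hq1 : ‖q‖ < 1)
    (hz : ‖z‖ < 1) :
    Multipliable (fun i : ℕ => (1 - q ^ i * z)⁻¹) ∧
    Summable (fun n : ℕ => z ^ n / ∏ k ∈ Finset.range n, (1 - q ^ (k + 1))) ∧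
    ∏' i : ℕ, (1 - q ^ i * z)⁻¹
      = ∑' n : ℕ, z ^ n / ∏ k ∈ Finset.range n, (1 - q ^ (k + 1)) := by
  have ht1 : ‖q‖ < 1 := hq1
  have ht0 : (0:ℝ) ≤ ‖q‖ := norm_nonneg q
  have hr1 : ‖z‖ < 1 := hz
  have hr0 : (0:ℝ) ≤ ‖z‖ := norm_nonneg z
  set t : ℝ := ‖q‖ with htdef
  set r : ℝ := ‖z‖ with hrdef
  set P : ℕ → ℂ := fun n => ∏ k ∈ Finset.range n, (1 - q ^ (k + 1)) with hPdef
  set C : ℝ := Real.exp (-(t / ((1 - t) * (1 - t)))) with hCdef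
  have hCpos : 0 < C := Real.exp_pos _
  -- norms of factors
  have hqz : ∀ i : ℕ, ‖q ^ i * z‖ ≤ r := by
    intro i
    rw [norm_mul, norm_pow]
    calc t ^ i * r ≤ 1 * r := by
          apply mul_le_mul_of_nonneg_right (pow_le_one₀ ht0 ht1.le) hr0
      _ = r := one_mul r
  have hne : ∀ i : ℕ, (1:ℂ) - q ^ i * z ≠ 0 := by
    intro i h
    have h1 : q ^ i * z = 1 := by linear_combination -h
    have := hqz i
    rw [h1, norm_one] at this
    linarith
  have hfacne : ∀ k : ℕ, (1:ℂ) - q ^ (k + 1) ≠ 0 := by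
    intro k h
    have h1 : q ^ (k+1) = 1 := by linear_combination -h
    have h2 : ‖q ^ (k+1)‖ ≤ t := by
      rw [norm_pow]
      calc t ^ (k+1) = t * t ^ k := by ring
        _ ≤ t * 1 := mul_le_mul_of_nonneg_left (pow_le_one₀ ht0 ht1.le) ht0
        _ = t := mul_one t
    rw [h1, norm_one] at h2
    linarith
  -- lower bound on the norm of partial q-Pochhammer products
  have hPlb : ∀ n, C ≤ ‖P n‖ := by
    intro n
    refine le_trans (aux_prod_lb ht0 ht1 n) ?_
    show _ ≤ ‖∏ k ∈ range n, ((1:ℂ) - q ^ (k+1))‖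
    calc ∏ k ∈ range n, (1 - t ^ (k+1)) ≤ ∏ k ∈ range n, ‖(1:ℂ) - q ^ (k+1)‖ := by
          apply Finset.prod_le_prod
          · intro i _
            have : t ^ (i+1) ≤ 1 := pow_le_one₀ ht0 ht1.le
            linarith
          · intro i _
            calc 1 - t ^ (i+1) = ‖(1:ℂ)‖ - ‖q ^ (i+1)‖ := by
                  rw [norm_one, norm_pow]
              _ ≤ ‖(1:ℂ) - q ^ (i+1)‖ := norm_sub_norm_le _ _
      _ = ‖∏ k ∈ range n, ((1:ℂ) - q ^ (k+1))‖ := (norm_prod _ _).symm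
  have hPne : ∀ n, P n ≠ 0 := fun n h => by
    have := hPlb n; rw [h, norm_zero] at this; linarith
  -- summability
  have hgbound : ∀ (w : ℂ), ‖w‖ ≤ r → ∀ n, ‖w ^ n / P n‖ ≤ C⁻¹ * r ^ n := by
    intro w hw n
    rw [norm_div, norm_pow]
    rw [div_eq_mul_inv, mul_comm]
    apply mul_le_mul
    · rw [inv_le_inv₀ (lt_of_lt_of_le hCpos (hPlb n)) hCpos]
      exact hPlb n
    · exact pow_le_pow_left₀ (norm_nonneg w) hw n
    · positivity
    · positivity
  have hgeom : Summable (fun n : ℕ => C⁻¹ * r ^ n) :=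
    (summable_geometric_of_lt_one hr0 hr1).mul_left _
  have hgnorm : ∀ (w : ℂ), ‖w‖ ≤ r → Summable (fun n => ‖w ^ n / P n‖) := by
    intro w hw
    exact Summable.of_nonneg_of_le (fun n => norm_nonneg _) (hgbound w hw) hgeom
  have hgs : ∀ (w : ℂ), ‖w‖ ≤ r → Summable (fun n => w ^ n / P n) := by
    intro w hw
    exact (hgnorm w hw).of_norm
  set S : ℂ → ℂ := fun w => ∑' n : ℕ, w ^ n / P n with hSdef
  -- functional equation
  have hfe : ∀ w : ℂ, ‖w‖ ≤ r → S w = (1 - w)⁻¹ * S (q * w) := by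
    intro w hw
    have hw1 : ‖w‖ < 1 := lt_of_le_of_lt hw hr1
    have h1w : (1:ℂ) - w ≠ 0 := by
      intro h
      have h1 : w = 1 := by linear_combination -h
      rw [h1, norm_one] at hw1; linarith
    have hqw : ‖q * w‖ ≤ r := by
      rw [norm_mul]
      calc t * ‖w‖ ≤ 1 * r := by
            apply mul_le_mul ht1.le hw (norm_nonneg w) zero_le_one
        _ = r := one_mul r
    have key : S w - S (q * w) = w * S w := by
      rw [hSdef]
      simp only []
      rw [← Summable.tsum_sub (hgs w hw) (hgs (q*w) hqw)]
      rw [Summable.tsum_eq_zero_add ((hgs w hw).sub (hgs (q*w) hqw))]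
      have h00 : w ^ 0 / P 0 - (q*w) ^ 0 / P 0 = 0 := by simp
      rw [h00, zero_add, ← tsum_mul_left]
      congr 1
      funext n
      have hPs : P (n+1) = P n * (1 - q ^ (n+1)) := prod_range_succ _ _
      rw [hPs, div_sub_div_same, mul_div_assoc',
        div_eq_div_iff (mul_ne_zero (hPne n) (hfacne n)) (hPne n)]
      ring
    have h2 : (1 - w) * S w = S (q * w) := by linear_combination key
    rw [← h2, inv_mul_cancel_left₀ h1w]
  -- iterate
  have hiter : ∀ N : ℕ, S z = (∏ i ∈ range N, (1 - q ^ i * z)⁻¹) * S (q ^ N * z) := by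
    intro N
    induction N with
    | zero => simp
    | succ N ih =>
      have hwN : ‖q ^ N * z‖ ≤ r := hqz N
      calc S z = (∏ i ∈ range N, (1 - q ^ i * z)⁻¹) * S (q ^ N * z) := ih
        _ = (∏ i ∈ range N, (1 - q ^ i * z)⁻¹) *
              ((1 - q ^ N * z)⁻¹ * S (q * (q ^ N * z))) := by rw [← hfe _ hwN]
        _ = (∏ i ∈ range (N+1), (1 - q ^ i * z)⁻¹) * S (q ^ (N+1) * z) := by
            rw [prod_range_succ, show q * (q ^ N * z) = q ^ (N+1) * z by ring]
            ring
  -- S (q^N z) → 1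
  have hb : ∀ w : ℂ, ‖w‖ ≤ r → ‖S w - 1‖ ≤ ‖w‖ * (C⁻¹ * (1 - r)⁻¹) := by
    intro w hw
    have hsum := hgs w hw
    have h0 : S w = 1 + ∑' n : ℕ, w ^ (n+1) / P (n+1) := by
      rw [hSdef]
      simp only []
      rw [Summable.tsum_eq_zero_add hsum]
      congr 1
      simp [hPdef]
    rw [h0, add_sub_cancel_left]
    have hsn : Summable (fun n : ℕ => ‖w ^ (n+1) / P (n+1)‖) :=
      (summable_nat_add_iff (f := fun n => ‖w ^ n / P n‖) 1).2 (hgnorm w hw)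
    calc ‖∑' n : ℕ, w ^ (n+1) / P (n+1)‖ ≤ ∑' n : ℕ, ‖w ^ (n+1) / P (n+1)‖ :=
          norm_tsum_le_tsum_norm hsn
      _ ≤ ∑' n : ℕ, ‖w‖ * (C⁻¹ * r ^ n) := by
          refine Summable.tsum_le_tsum ?_ hsn (hgeom.mul_left ‖w‖)
          intro n
          rw [norm_div, norm_pow]
          calc ‖w‖ ^ (n+1) / ‖P (n+1)‖ ≤ (‖w‖ * r ^ n) / C := by
                apply div_le_div₀ (by positivity) ?_ hCpos (hPlb _)
                calc ‖w‖ ^ (n+1) = ‖w‖ * ‖w‖ ^ n := by ring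
                  _ ≤ ‖w‖ * r ^ n :=
                      mul_le_mul_of_nonneg_left (pow_le_pow_left₀ (norm_nonneg w) hw n)
                        (norm_nonneg w)
            _ = ‖w‖ * (C⁻¹ * r ^ n) := by ring
      _ = ‖w‖ * (C⁻¹ * (1 - r)⁻¹) := by
          rw [tsum_mul_left, tsum_mul_left, tsum_geometric_of_lt_one hr0 hr1]
  -- limit of S (q^N z)
  have hlim : Tendsto (fun N : ℕ => S (q ^ N * z)) atTop (𝓝 1) := by
    rw [tendsto_iff_norm_sub_tendsto_zero]
    apply squeeze_zero (fun N => norm_nonneg _)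
      (g := fun N : ℕ => t ^ N * (r * (C⁻¹ * (1 - r)⁻¹)))
    · intro N
      calc ‖S (q ^ N * z) - 1‖ ≤ ‖q ^ N * z‖ * (C⁻¹ * (1 - r)⁻¹) := hb _ (hqz N)
        _ = t ^ N * (r * (C⁻¹ * (1 - r)⁻¹)) := by
            rw [norm_mul, norm_pow]; ring
    · have := (tendsto_pow_atTop_nhds_zero_of_lt_one ht0 ht1).mul_const
        (r * (C⁻¹ * (1 - r)⁻¹))
      simpa using this
  -- multipliability
  have hM : Multipliable (fun i : ℕ => (1 - q ^ i * z)⁻¹) := by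
    have hlog : Summable (fun i : ℕ => Complex.log ((1 - q ^ i * z)⁻¹)) := by
      have hrw : ∀ i : ℕ, Complex.log ((1 - q ^ i * z)⁻¹) = -Complex.log (1 - q ^ i * z) := by
        intro i
        apply Complex.log_inv
        intro hpi
        rw [Complex.arg_eq_pi_iff] at hpi
        obtain ⟨hre, _⟩ := hpi
        have h1 : (1 - q ^ i * z).re = 1 - (q ^ i * z).re := by simp
        have h2 : (q ^ i * z).re ≤ ‖q ^ i * z‖ := Complex.re_le_norm _
        have := hqz i
        rw [h1] at hre
        linarith
      simp only [hrw]
      apply Summable.neg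
      apply Summable.of_norm
      have hbound : ∀ i : ℕ, ‖Complex.log (1 - q ^ i * z)‖ ≤ t ^ i * ((1 - r)⁻¹ / 2 + 1) := by
        intro i
        have hlt : ‖-(q ^ i * z)‖ < 1 := by
          rw [norm_neg]; exact lt_of_le_of_lt (hqz i) hr1
        have := Complex.norm_log_one_add_le hlt
        rw [show (1 : ℂ) + -(q ^ i * z) = 1 - q ^ i * z by ring, norm_neg] at this
        refine le_trans this ?_
        have h1 : ‖q ^ i * z‖ ≤ t ^ i := by
          rw [norm_mul, norm_pow]
          calc t ^ i * r ≤ t ^ i * 1 := by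
                apply mul_le_mul_of_nonneg_left hr1.le (by positivity)
            _ = t ^ i := mul_one _
        have h2 : ‖q ^ i * z‖ ^ 2 ≤ t ^ i := by
          calc ‖q ^ i * z‖ ^ 2 = ‖q ^ i * z‖ * ‖q ^ i * z‖ := sq _
            _ ≤ t ^ i * 1 := by
                apply mul_le_mul h1 (le_of_lt (lt_of_le_of_lt (hqz i) hr1))
                  (norm_nonneg _) (by positivity)
            _ = t ^ i := mul_one _
        have h3 : (1 - ‖q ^ i * z‖)⁻¹ ≤ (1 - r)⁻¹ := by
          apply inv_anti₀ (by linarith)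
          linarith [hqz i]
        calc ‖q ^ i * z‖ ^ 2 * (1 - ‖q ^ i * z‖)⁻¹ / 2 + ‖q ^ i * z‖
            ≤ t ^ i * (1 - r)⁻¹ / 2 + t ^ i := by
              apply add_le_add _ h1
              have h4 : ‖q ^ i * z‖ ^ 2 * (1 - ‖q ^ i * z‖)⁻¹ ≤ t ^ i * (1 - r)⁻¹ :=
                mul_le_mul h2 h3 (inv_nonneg.2 (by linarith [hqz i])) (by positivity)
              linarith
            _ = t ^ i * ((1 - r)⁻¹ / 2 + 1) := by ring
      apply Summable.of_nonneg_of_le (fun i => norm_nonneg _) hbound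
      exact (summable_geometric_of_lt_one ht0 ht1).mul_right _
    exact Complex.multipliable_of_summable_log hlog
  -- conclusion
  refine ⟨hM, hgs z (le_refl r), ?_⟩
  have hprod : Tendsto (fun N : ℕ => ∏ i ∈ range N, (1 - q ^ i * z)⁻¹) atTop
      (𝓝 (∏' i : ℕ, (1 - q ^ i * z)⁻¹)) := hM.hasProd.tendsto_prod_nat
  have hcomb : Tendsto (fun N : ℕ => (∏ i ∈ range N, (1 - q ^ i * z)⁻¹) * S (q ^ N * z))
      atTop (𝓝 ((∏' i : ℕ, (1 - q ^ i * z)⁻¹) * 1)) := hprod.mul hlim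
  have hconst : Tendsto (fun _ : ℕ => S z) atTop (𝓝 (S z)) := tendsto_const_nhds
  have heq : (fun N : ℕ => (∏ i ∈ range N, (1 - q ^ i * z)⁻¹) * S (q ^ N * z))
      = fun _ : ℕ => S z := funext fun N => (hiter N).symm
  rw [heq] at hcomb
  have := tendsto_nhds_unique hcomb hconst
  rw [mul_one] at this
  exact this
end

section
/- Let 0 < q < 1 and β < 0, and define r_i = β H_q(iβ) for i ∈ ℤ and ρ_j = ∏_{l=1}^j r_l for j ≥ 1 (ρ_0 = 1). Then ρ_j → 0 as j → ∞; in fact log|ρ_j| = j·log²(j)/(2 log q) + O(j log j), which tends to −∞ since log q < 0. -/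
/-- `H_q(x) = ∏_{m≥0} (1 - q^m x)⁻¹` (real version). -/
noncomputable def Hq (q x : ℝ) : ℝ := ∏' m : ℕ, (1 - q ^ m * x)⁻¹

/-- `ρ_j = ∏_{l=1}^j β H_q(lβ)`. -/
noncomputable def rhoSeq (q β : ℝ) (j : ℕ) : ℝ :=
  ∏ l ∈ Finset.Icc 1 j, (β * Hq q ((l : ℝ) * β))

open Real Filter Finset

noncomputable def Slog (q t : ℝ) : ℝ := ∑' m : ℕ, Real.log (1 + q ^ m * t)

noncomputable def Dterm (q b : ℝ) (l : ℕ) : ℝ :=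
  Real.log b - Slog q ((l : ℝ) * b) + (Real.log l)^2 / (2 * (-Real.log q))

lemma sum_log_lower (j : ℕ) :
    (j : ℝ) * Real.log j - j ≤ ∑ l ∈ Icc 1 j, Real.log l := by
  induction j with
  | zero => simp
  | succ n ih =>
    rw [Finset.sum_Icc_succ_top (by omega)]
    have hn1 : (0:ℝ) < (n:ℝ) + 1 := by positivity
    push_cast
    have key : ((n:ℝ) + 1) * Real.log (n+1) - (n+1) ≤
        ((n:ℝ) * Real.log n - n) + Real.log (n+1) := by
      rcases Nat.eq_zero_or_pos n with h0 | hpos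
      · subst h0; simp
      · have hn : (0:ℝ) < n := by exact_mod_cast hpos
        have hlog : Real.log ((n+1)/n) ≤ ((n:ℝ)+1)/n - 1 :=
          Real.log_le_sub_one_of_pos (by positivity)
        rw [Real.log_div (by positivity) (by positivity)] at hlog
        have h2 : ((n:ℝ)+1)/n - 1 = 1/n := by field_simp; ring
        rw [h2] at hlog
        have := mul_le_mul_of_nonneg_left hlog hn.le
        have h3 : (n:ℝ) * (1/n) = 1 := by field_simp
        nlinarith
    linarith

lemma sum_sq_log_lower (j : ℕ) (hj : 1 ≤ j) :
    (j:ℝ) * (Real.log j)^2 - 2*j*Real.log j ≤ ∑ l ∈ Icc 1 j, (Real.log l)^2 := by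
  have hlogj : 0 ≤ Real.log j := Real.log_nonneg (by exact_mod_cast hj)
  have h1 : ∀ l ∈ Icc 1 j, (Real.log j)^2 - 2*Real.log j*(Real.log j - Real.log l)
      ≤ (Real.log l)^2 := by
    intro l hl
    simp only [Finset.mem_Icc] at hl
    have hll : 0 ≤ Real.log l := Real.log_nonneg (by exact_mod_cast hl.1)
    have hmono : Real.log l ≤ Real.log j := by
      apply Real.log_le_log (by exact_mod_cast hl.1) (by exact_mod_cast hl.2)
    nlinarith
  have h2 := Finset.sum_le_sum h1
  have hcard : (Icc 1 j).card = j := by rw [Nat.card_Icc]; omega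
  have h3 : ∑ l ∈ Icc 1 j, ((Real.log j)^2 - 2*Real.log j*(Real.log j - Real.log l))
      = (j:ℝ)*(Real.log j)^2 - 2*Real.log j*((j:ℝ)*Real.log j - ∑ l ∈ Icc 1 j, Real.log l) := by
    rw [Finset.sum_sub_distrib, ← Finset.mul_sum, Finset.sum_sub_distrib, Finset.sum_const,
      Finset.sum_const, nsmul_eq_mul, nsmul_eq_mul, hcard]
  have h4 := sum_log_lower j
  rw [h3] at h2
  nlinarith

lemma sum_sq_log_upper (j : ℕ) :
    ∑ l ∈ Icc 1 j, (Real.log l)^2 ≤ (j:ℝ) * (Real.log j)^2 := by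
  have hcard : (Icc 1 j).card = j := by rw [Nat.card_Icc]; omega
  calc ∑ l ∈ Icc 1 j, (Real.log l)^2 ≤ ∑ l ∈ Icc 1 j, (Real.log j)^2 := by
        apply Finset.sum_le_sum
        intro l hl
        simp only [Finset.mem_Icc] at hl
        have hll : 0 ≤ Real.log l := Real.log_nonneg (by exact_mod_cast hl.1)
        have hmono : Real.log l ≤ Real.log j :=
          Real.log_le_log (by exact_mod_cast hl.1) (by exact_mod_cast hl.2)
        nlinarith
  _ = (j:ℝ) * (Real.log j)^2 := by simp [hcard]

lemma summable_logterm {q : ℝ} (hq0 : 0 < q) (hq1 : q < 1) {t : ℝ} (ht : 0 ≤ t) :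
    Summable (fun m : ℕ => Real.log (1 + q ^ m * t)) := by
  apply Summable.of_nonneg_of_le (fun m => ?_) (fun m => ?_)
    ((summable_geometric_of_lt_one hq0.le hq1).mul_right t)
  · exact Real.log_nonneg (by nlinarith [pow_pos hq0 m])
  · calc Real.log (1 + q ^ m * t) ≤ (1 + q ^ m * t) - 1 :=
        Real.log_le_sub_one_of_pos (by nlinarith [pow_pos hq0 m])
    _ = q ^ m * t := by ring

lemma quad_est {c u x : ℝ} (hc : 0 < c) (hu : 0 ≤ u) (h1 : u - 1 ≤ x) (h2 : x ≤ u) :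
    |(x+1)*(c*u) - c*(x*(x+1)/2) - (c*u)^2/(2*c)| ≤ c*u/2 + c/2 := by
  have hval : (x+1)*(c*u) - c*(x*(x+1)/2) - (c*u)^2/(2*c)
      = c * ((2*(x+1)*u - x*(x+1) - u^2)/2) := by
    field_simp
  rw [hval, abs_mul, abs_of_pos hc]
  have h3 : |(2*(x+1)*u - x*(x+1) - u^2)/2| ≤ u/2 + 1/2 := by
    rw [abs_le]
    constructor <;> nlinarith [mul_nonneg (sub_nonneg.2 h2) (by linarith : 0 ≤ 1 - (u - x))]
  calc c * |(2*(x+1)*u - x*(x+1) - u^2)/2| ≤ c * (u/2 + 1/2) :=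
        mul_le_mul_of_nonneg_left h3 hc.le
  _ = c*u/2 + c/2 := by ring

set_option maxHeartbeats 2000000 in
lemma Slog_asymp {q : ℝ} (hq0 : 0 < q) (hq1 : q < 1) {t : ℝ} (ht : 1 ≤ t) :
    |Slog q t - (Real.log t)^2 / (2 * (-Real.log q))| ≤
      (1/2 + Real.log 2 / (-Real.log q)) * Real.log t
      + ((-Real.log q)/2 + Real.log 2 + 1/(1-q)) := by
  set c := -Real.log q with hc_def
  have hc : 0 < c := by
    have := Real.log_neg hq0 hq1
    simp [hc_def]; linarith
  set L := Real.log t with hL_def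
  have hL : 0 ≤ L := Real.log_nonneg ht
  set u := L / c with hu_def
  have hu : 0 ≤ u := by positivity
  set m₀ := ⌊u⌋₊ with hm0_def
  have hfl : (m₀ : ℝ) ≤ u := Nat.floor_le hu
  have hfl' : u < (m₀ : ℝ) + 1 := Nat.lt_floor_add_one u
  clear_value c L u
  clear_value m₀
  set n := m₀ + 1 with hn_def
  clear_value n
  have ht0 : 0 < t := lt_of_lt_of_le one_pos ht
  have hexp : ∀ m : ℕ, q ^ m * t = Real.exp (L - m * c) := by
    intro m
    rw [hL_def, hc_def]
    rw [show Real.log t - (m:ℝ) * -Real.log q = (m:ℝ) * Real.log q + Real.log t by ring,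
      Real.exp_add, Real.exp_log ht0, Real.exp_nat_mul, Real.exp_log hq0]
  have hterm_pos : ∀ m : ℕ, 0 < 1 + q ^ m * t := fun m => by nlinarith [pow_pos hq0 m]
  have hsum := summable_logterm hq0 hq1 ht0.le
  -- split
  have hsplit : ∑ i ∈ range n, Real.log (1 + q ^ i * t)
      + ∑' i : ℕ, Real.log (1 + q ^ (i + n) * t) = Slog q t := by
    exact Summable.sum_add_tsum_nat_add n hsum
  set T := ∑' i : ℕ, Real.log (1 + q ^ (i + n) * t) with hT_def
  set M := ∑ i ∈ range n, Real.log (1 + q ^ i * t) with hM_def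
  clear_value T M
  have hLuc : L = c * u := by rw [hu_def]; field_simp
  have htail_nonneg : 0 ≤ T := by
    rw [hT_def]
    exact tsum_nonneg (fun i => Real.log_nonneg (by nlinarith [pow_pos hq0 (i + n)]))
  have hqn : q ^ n * t ≤ 1 := by
    rw [hexp n]
    rw [Real.exp_le_one_iff]
    have hun : u < (n : ℝ) := by push_cast [hn_def]; linarith
    nlinarith
  have hmaj : Summable (fun i : ℕ => q ^ (i + n) * t) :=
    (summable_nat_add_iff n).mpr ((summable_geometric_of_lt_one hq0.le hq1).mul_right t)
  have htail_le : T ≤ 1 / (1 - q) := by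
    have h1 : T ≤ ∑' i : ℕ, q ^ (i + n) * t := by
      rw [hT_def]
      refine Summable.tsum_le_tsum (fun i => ?_) ((summable_nat_add_iff n).mpr hsum) hmaj
      calc Real.log (1 + q ^ (i + n) * t) ≤ (1 + q ^ (i + n) * t) - 1 :=
            Real.log_le_sub_one_of_pos (hterm_pos _)
      _ = q ^ (i + n) * t := by ring
    have h2 : ∑' i : ℕ, q ^ (i + n) * t = (∑' i : ℕ, q ^ i) * (q ^ n * t) := by
      calc ∑' i : ℕ, q ^ (i + n) * t = ∑' i : ℕ, q ^ i * (q ^ n * t) :=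
            tsum_congr (fun i => by rw [pow_add]; ring)
      _ = (∑' i : ℕ, q ^ i) * (q ^ n * t) := tsum_mul_right
    have h3 : ∑' i : ℕ, q ^ i = (1 - q)⁻¹ := tsum_geometric_of_lt_one hq0.le hq1
    rw [h2, h3] at h1
    have h1q : 0 < 1 - q := by linarith
    have hinv : 0 < (1 - q)⁻¹ := by positivity
    have hqnt : 0 < q ^ n * t := by positivity
    calc T ≤ (1 - q)⁻¹ * (q ^ n * t) := h1
    _ ≤ (1 - q)⁻¹ * 1 := by nlinarith
    _ = 1 / (1 - q) := by rw [mul_one, one_div]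
  have hgauss : ∑ i ∈ range n, (i : ℝ) = (n : ℝ) * ((n : ℝ) - 1) / 2 := by
    have h := Finset.sum_range_id_mul_two n
    have h2 := congrArg (Nat.cast : ℕ → ℝ) h
    push_cast [Nat.cast_sub (by omega : 1 ≤ n)] at h2
    linarith
  have hlow : ∀ i ∈ range n, L - (i : ℝ) * c ≤ Real.log (1 + q ^ i * t) := by
    intro i _
    calc L - (i : ℝ) * c = Real.log (q ^ i * t) := by rw [hexp i, Real.log_exp]
    _ ≤ Real.log (1 + q ^ i * t) :=
        Real.log_le_log (by positivity) (by nlinarith [pow_pos hq0 i])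
  have hup : ∀ i ∈ range n, Real.log (1 + q ^ i * t) ≤ Real.log 2 + (L - (i : ℝ) * c) := by
    intro i hi
    simp only [Finset.mem_range] at hi
    have hge1 : 1 ≤ q ^ i * t := by
      rw [hexp i, Real.one_le_exp_iff]
      have hi' : (i : ℝ) ≤ (m₀ : ℝ) := by
        have : i ≤ m₀ := by omega
        exact_mod_cast this
      nlinarith
    calc Real.log (1 + q ^ i * t) ≤ Real.log (2 * (q ^ i * t)) :=
          Real.log_le_log (hterm_pos i) (by nlinarith)
    _ = Real.log 2 + Real.log (q ^ i * t) := Real.log_mul (by norm_num) (by positivity)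
    _ = Real.log 2 + (L - (i : ℝ) * c) := by rw [hexp i, Real.log_exp]
  have hsum_lin : ∑ i ∈ range n, (L - (i : ℝ) * c)
      = (n : ℝ) * L - c * ((n : ℝ) * ((n : ℝ) - 1) / 2) := by
    rw [Finset.sum_sub_distrib, Finset.sum_const, card_range, nsmul_eq_mul,
      ← Finset.sum_mul, hgauss]
    ring
  have hMlow : (n : ℝ) * L - c * ((n : ℝ) * ((n : ℝ) - 1) / 2) ≤ M := by
    rw [hM_def, ← hsum_lin]
    exact Finset.sum_le_sum hlow
  have hMup : M ≤ (n : ℝ) * Real.log 2 + ((n : ℝ) * L - c * ((n : ℝ) * ((n : ℝ) - 1) / 2)) := by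
    rw [hM_def]
    calc ∑ i ∈ range n, Real.log (1 + q ^ i * t)
        ≤ ∑ i ∈ range n, (Real.log 2 + (L - (i : ℝ) * c)) := Finset.sum_le_sum hup
    _ = (n : ℝ) * Real.log 2 + ((n : ℝ) * L - c * ((n : ℝ) * ((n : ℝ) - 1) / 2)) := by
        rw [Finset.sum_add_distrib, Finset.sum_const, card_range, nsmul_eq_mul, hsum_lin]
  have hquad := quad_est hc hu (by linarith : u - 1 ≤ (m₀ : ℝ)) hfl
  have hnr : (n : ℝ) = (m₀ : ℝ) + 1 := by push_cast [hn_def]; ring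
  have hXeq : (n : ℝ) * L - c * ((n : ℝ) * ((n : ℝ) - 1) / 2)
      = ((m₀:ℝ) + 1) * (c * u) - c * ((m₀:ℝ) * ((m₀:ℝ) + 1) / 2) := by
    rw [hnr, hLuc]; ring
  have hL2 : (c * u) ^ 2 / (2 * c) = L ^ 2 / (2 * c) := by rw [← hLuc]
  rw [hL2] at hquad
  have hSlog : Slog q t = M + T := by rw [← hsplit]
  have hlog2 : 0 < Real.log 2 := Real.log_pos (by norm_num)
  have hnle : (n : ℝ) ≤ u + 1 := by rw [hnr]; linarith
  have h1q : 0 < 1 - q := by linarith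
  have habs := abs_le.mp hquad
  rw [hXeq] at hMlow hMup
  rw [abs_le]
  have huc : u = L / c := hu_def
  have hnlog2 : (n : ℝ) * Real.log 2 ≤ (Real.log 2 / c) * L + Real.log 2 := by
    have : (n : ℝ) * Real.log 2 ≤ (u + 1) * Real.log 2 :=
      mul_le_mul_of_nonneg_right hnle hlog2.le
    calc (n : ℝ) * Real.log 2 ≤ (u + 1) * Real.log 2 := this
    _ = (Real.log 2 / c) * L + Real.log 2 := by rw [huc]; field_simp
  constructor
  · rw [hSlog]
    have : (1/2 + Real.log 2 / c) * L + (c/2 + Real.log 2 + 1/(1-q)) ≥ L/2 + c/2 := by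
      have : 0 ≤ Real.log 2 / c * L := by positivity
      have : 0 ≤ 1/(1-q) := by positivity
      nlinarith
    nlinarith
  · rw [hSlog]
    nlinarith

lemma Hq_val {q : ℝ} (hq0 : 0 < q) (hq1 : q < 1) {t : ℝ} (ht : 0 ≤ t) :
    Hq q (-t) = Real.exp (-(Slog q t)) := by
  have hpos : ∀ (_ : Unit) (m : ℕ), 0 < (1 + q ^ m * t)⁻¹ := by
    intro _ m
    have := pow_pos hq0 m
    positivity
  have hsumm : ∀ (_ : Unit), Summable fun m : ℕ => Real.log ((1 + q ^ m * t)⁻¹) := by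
    intro _
    simp only [Real.log_inv]
    exact (summable_logterm hq0 hq1 ht).neg
  have h := Real.rexp_tsum_eq_tprod (f := fun m => (1 + q ^ m * t)⁻¹) (hpos ()) (hsumm ())
  have h2 : Real.exp (∑' m : ℕ, Real.log ((1 + q ^ m * t)⁻¹)) = ∏' m : ℕ, (1 + q ^ m * t)⁻¹ := h
  have h3 : ∑' m : ℕ, Real.log ((1 + q ^ m * t)⁻¹) = -(Slog q t) := by
    simp only [Real.log_inv, Slog]
    exact tsum_neg
  rw [h3] at h2
  rw [Hq]
  calc ∏' m : ℕ, (1 - q ^ m * -t)⁻¹ = ∏' m : ℕ, (1 + q ^ m * t)⁻¹ :=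
        tprod_congr (fun m => by ring_nf)
  _ = Real.exp (-(Slog q t)) := h2.symm

lemma rho_log {q β : ℝ} (hq0 : 0 < q) (hq1 : q < 1) (hβ : β < 0) (j : ℕ) :
    Real.log |rhoSeq q β j|
      = ∑ l ∈ Icc 1 j, (Real.log (-β) - Slog q ((l : ℝ) * (-β)))
    ∧ rhoSeq q β j ≠ 0 := by
  set b := -β with hb_def
  have hb : 0 < b := by simp [hb_def]; linarith
  have hfac : ∀ l : ℕ, β * Hq q ((l : ℝ) * β)
      = -(b * Real.exp (-(Slog q ((l : ℝ) * b)))) := by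
    intro l
    have h1 : (l : ℝ) * β = -((l : ℝ) * b) := by rw [hb_def]; ring
    rw [h1, Hq_val hq0 hq1 (by positivity)]
    have : β = -b := by rw [hb_def]; ring
    rw [this]; ring
  have habs : ∀ l : ℕ, |β * Hq q ((l : ℝ) * β)| = b * Real.exp (-(Slog q ((l : ℝ) * b))) := by
    intro l
    rw [hfac l, abs_neg, abs_of_pos (by positivity)]
  constructor
  · rw [rhoSeq, Finset.abs_prod, Real.log_prod (fun l _ => by
      rw [habs l]; positivity)]
    apply Finset.sum_congr rfl
    intro l _
    rw [habs l, Real.log_mul (ne_of_gt hb) (Real.exp_ne_zero _), Real.log_exp]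
    ring
  · rw [rhoSeq]
    apply Finset.prod_ne_zero_iff.mpr
    intro l _
    rw [hfac l]
    have : 0 < b * Real.exp (-(Slog q ((l : ℝ) * b))) := by positivity
    intro hcon
    rw [neg_eq_zero] at hcon
    linarith [this.ne' hcon]

lemma Dl_bound {q b : ℝ} (hq0 : 0 < q) (hq1 : q < 1) (hb : 0 < b)
    {l : ℕ} (hl : 1 ≤ l) (hlb : 1 ≤ (l : ℝ) * b) :
    |Real.log b - Slog q ((l : ℝ) * b) + (Real.log l)^2 / (2 * (-Real.log q))|
      ≤ ((1/2 + Real.log 2 / (-Real.log q)) + |Real.log b| / (-Real.log q)) * Real.log l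
        + (|Real.log b| * (1 + (1/2 + Real.log 2 / (-Real.log q)))
           + ((-Real.log q)/2 + Real.log 2 + 1/(1-q)) + |Real.log b|^2 / (2 * (-Real.log q))) := by
  have hc : 0 < -Real.log q := by have := Real.log_neg hq0 hq1; linarith
  set c := -Real.log q with hc_def
  set A := 1/2 + Real.log 2 / c with hA_def
  set B := c/2 + Real.log 2 + 1/(1-q) with hB_def
  set Lb := |Real.log b| with hLb_def
  have hA : 0 < A := by
    have hlog2 : 0 < Real.log 2 := Real.log_pos (by norm_num)
    have : 0 < Real.log 2 / c := by positivity
    rw [hA_def]; linarith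
  have hB : 0 < B := by
    have hlog2 : 0 < Real.log 2 := Real.log_pos (by norm_num)
    have h1q : 0 < 1 - q := by linarith
    have : 0 < 1/(1-q) := by positivity
    rw [hB_def]; linarith
  have hl0 : (0:ℝ) < l := by exact_mod_cast hl
  have hlogl : 0 ≤ Real.log l := Real.log_nonneg (by exact_mod_cast hl)
  have hL' : Real.log ((l:ℝ) * b) = Real.log l + Real.log b :=
    Real.log_mul (ne_of_gt hl0) (ne_of_gt hb)
  set S := Slog q ((l : ℝ) * b) with hS_def
  set e := S - (Real.log ((l:ℝ)*b))^2 / (2*c) with he_def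
  have he : |e| ≤ A * Real.log ((l:ℝ)*b) + B := Slog_asymp hq0 hq1 hlb
  have hLpos : 0 ≤ Real.log ((l:ℝ)*b) := Real.log_nonneg hlb
  have hLle : Real.log ((l:ℝ)*b) ≤ Real.log l + Lb := by
    rw [hL', hLb_def]; linarith [le_abs_self (Real.log b)]
  have hD : Real.log b - S + (Real.log l)^2 / (2*c)
      = Real.log b - e - (2*Real.log b*Real.log l + (Real.log b)^2)/(2*c) := by
    rw [he_def, hL']
    field_simp
    ring
  rw [hD]
  have htri : |Real.log b - e - (2*Real.log b*Real.log l + (Real.log b)^2)/(2*c)|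
      ≤ Lb + |e| + |2*Real.log b*Real.log l + (Real.log b)^2|/(2*c) := by
    calc |Real.log b - e - (2*Real.log b*Real.log l + (Real.log b)^2)/(2*c)|
        ≤ |Real.log b - e| + |(2*Real.log b*Real.log l + (Real.log b)^2)/(2*c)| :=
          abs_sub _ _
    _ ≤ (|Real.log b| + |e|) + |(2*Real.log b*Real.log l + (Real.log b)^2)|/|2*c| := by
        rw [abs_div]
        exact add_le_add (abs_sub _ _) le_rfl
    _ = Lb + |e| + |2*Real.log b*Real.log l + (Real.log b)^2|/(2*c) := by
        rw [abs_of_pos (by positivity : (0:ℝ) < 2*c), hLb_def]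
  have hX : |2*Real.log b*Real.log l + (Real.log b)^2| ≤ 2*Lb*Real.log l + Lb^2 := by
    calc |2*Real.log b*Real.log l + (Real.log b)^2|
        ≤ |2*Real.log b*Real.log l| + |(Real.log b)^2| := abs_add_le _ _
    _ = 2*Lb*Real.log l + Lb^2 := by
        rw [abs_mul, abs_mul, abs_two, abs_of_nonneg hlogl,
          abs_of_nonneg (sq_nonneg (Real.log b)), ← sq_abs (Real.log b), hLb_def]
  have hdiv : |2*Real.log b*Real.log l + (Real.log b)^2|/(2*c)
      ≤ (2*Lb*Real.log l + Lb^2)/(2*c) := by gcongr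
  have he2 : |e| ≤ A * Real.log l + A * Lb + B := by
    have : A * Real.log ((l:ℝ)*b) ≤ A * (Real.log l + Lb) :=
      mul_le_mul_of_nonneg_left hLle hA.le
    nlinarith
  have hsplit2 : (2*Lb*Real.log l + Lb^2)/(2*c) = (Lb/c)*Real.log l + Lb^2/(2*c) := by
    field_simp
  calc |Real.log b - e - (2*Real.log b*Real.log l + (Real.log b)^2)/(2*c)|
      ≤ Lb + |e| + |2*Real.log b*Real.log l + (Real.log b)^2|/(2*c) := htri
  _ ≤ Lb + (A * Real.log l + A * Lb + B) + ((Lb/c)*Real.log l + Lb^2/(2*c)) := by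
      rw [← hsplit2]
      exact add_le_add (add_le_add le_rfl he2) hdiv
  _ = (A + Lb/c) * Real.log l + (Lb * (1 + A) + B + Lb^2/(2*c)) := by ring

lemma Dsum_bound {q b : ℝ} (hq0 : 0 < q) (hq1 : q < 1) (hb : 0 < b) :
    ∃ P ≥ (0:ℝ), ∃ K₁ ≥ (0:ℝ), ∃ K₂ ≥ (0:ℝ), ∀ j : ℕ, 1 ≤ j →
      |∑ l ∈ Icc 1 j, Dterm q b l| ≤ P + K₁ * ((j:ℝ) * Real.log j) + K₂ * j := by
  have hc : 0 < -Real.log q := by have := Real.log_neg hq0 hq1; linarith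
  obtain ⟨K₁, hK₁, K₂, hK₂, hDl⟩ : ∃ K₁ ≥ (0:ℝ), ∃ K₂ ≥ (0:ℝ), ∀ l : ℕ, 1 ≤ l →
      1 ≤ (l:ℝ) * b → |Dterm q b l| ≤ K₁ * Real.log l + K₂ := by
    refine ⟨_, ?_, _, ?_, fun l hl hlb => Dl_bound hq0 hq1 hb hl hlb⟩
    · have hlog2 : 0 < Real.log 2 := Real.log_pos (by norm_num)
      positivity
    · have hlog2 : 0 < Real.log 2 := Real.log_pos (by norm_num)
      have h1q : 0 < 1 - q := by linarith
      positivity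
  set l₁ := max (⌈1/b⌉₊) 1 with hl₁_def
  refine ⟨∑ l ∈ Icc 1 l₁, |Dterm q b l|, Finset.sum_nonneg (fun _ _ => abs_nonneg _),
    K₁, hK₁, K₂, hK₂, fun j hj => ?_⟩
  have hperm : ∀ l ∈ Icc 1 j, |Dterm q b l|
      ≤ (K₁ * Real.log l + K₂) + (if l ≤ l₁ then |Dterm q b l| else 0) := by
    intro l hl
    simp only [Finset.mem_Icc] at hl
    have hlogl : 0 ≤ Real.log l := Real.log_nonneg (by exact_mod_cast hl.1)
    by_cases hll : l ≤ l₁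
    · simp only [hll, if_true]
      have : 0 ≤ K₁ * Real.log l + K₂ := by positivity
      linarith
    · simp only [hll, if_false, add_zero]
      push_neg at hll
      have hceil : ⌈1/b⌉₊ ≤ l := le_trans (le_max_left _ _) hll.le
      have hlb : 1 ≤ (l:ℝ) * b := by
        have h1 : (1:ℝ)/b ≤ (⌈1/b⌉₊ : ℝ) := Nat.le_ceil _
        have h2 : ((⌈1/b⌉₊ : ℕ) : ℝ) ≤ (l : ℝ) := by exact_mod_cast hceil
        have h3 : (1:ℝ)/b ≤ (l:ℝ) := le_trans h1 h2
        calc (1:ℝ) = (1/b) * b := by field_simp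
        _ ≤ (l:ℝ) * b := mul_le_mul_of_nonneg_right h3 hb.le
      exact hDl l hl.1 hlb
  calc |∑ l ∈ Icc 1 j, Dterm q b l| ≤ ∑ l ∈ Icc 1 j, |Dterm q b l| :=
        Finset.abs_sum_le_sum_abs _ _
  _ ≤ ∑ l ∈ Icc 1 j, ((K₁ * Real.log l + K₂) + (if l ≤ l₁ then |Dterm q b l| else 0)) :=
        Finset.sum_le_sum hperm
  _ = (∑ l ∈ Icc 1 j, (K₁ * Real.log l + K₂))
      + ∑ l ∈ Icc 1 j, (if l ≤ l₁ then |Dterm q b l| else 0) := Finset.sum_add_distrib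
  _ ≤ (∑ l ∈ Icc 1 j, (K₁ * Real.log j + K₂)) + ∑ l ∈ Icc 1 l₁, |Dterm q b l| := by
      apply add_le_add
      · apply Finset.sum_le_sum
        intro l hl
        simp only [Finset.mem_Icc] at hl
        have : Real.log l ≤ Real.log j :=
          Real.log_le_log (by exact_mod_cast hl.1) (by exact_mod_cast hl.2)
        nlinarith
      · calc ∑ l ∈ Icc 1 j, (if l ≤ l₁ then |Dterm q b l| else 0)
            = ∑ l ∈ (Icc 1 j).filter (· ≤ l₁), |Dterm q b l| := (Finset.sum_filter _ _).symm
        _ ≤ ∑ l ∈ Icc 1 l₁, |Dterm q b l| := by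
            apply Finset.sum_le_sum_of_subset_of_nonneg
            · intro x hx
              simp only [Finset.mem_filter, Finset.mem_Icc] at hx ⊢
              omega
            · intro _ _ _
              exact abs_nonneg _
  _ = (∑ l ∈ Icc 1 l₁, |Dterm q b l|) + K₁ * ((j:ℝ) * Real.log j) + K₂ * j := by
      rw [Finset.sum_const, Nat.card_Icc]
      simp
      ring


lemma jlog_bounds {j : ℕ} (hj : 2 ≤ j) :
    1 ≤ (j:ℝ) * Real.log j ∧ (j:ℝ) ≤ 2 * ((j:ℝ) * Real.log j) := by
  have hj2 : (2:ℝ) ≤ (j:ℝ) := by exact_mod_cast hj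
  have hlog2 : (0.6931471803:ℝ) < Real.log 2 := Real.log_two_gt_d9
  have hmono : Real.log 2 ≤ Real.log j := Real.log_le_log (by norm_num) hj2
  constructor <;> nlinarith

/-- For `0 < q < 1` and `β < 0`, `ρ_j → 0` as `j → ∞`; in fact
`log |ρ_j| = j log²(j)/(2 log q) + O(j log j)` which tends to `-∞` since `log q < 0`. -/
theorem rho_tendsto_zero (q β : ℝ) (hq0 : 0 < q) (hq1 : q < 1) (hβ : β < 0) :
    Filter.Tendsto (fun j : ℕ => rhoSeq q β j) Filter.atTop (nhds 0) ∧
    ∃ C > (0 : ℝ), ∀ j : ℕ, 2 ≤ j →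
      |Real.log |rhoSeq q β j| - (j : ℝ) * (Real.log j) ^ 2 / (2 * Real.log q)|
        ≤ C * (j : ℝ) * Real.log j := by
  have hb : 0 < -β := by linarith
  have hc : 0 < -Real.log q := by have := Real.log_neg hq0 hq1; linarith
  have hlq : Real.log q ≠ 0 := by intro h; rw [h] at hc; norm_num at hc
  obtain ⟨P, hP, K₁, hK₁, K₂, hK₂, hDsum⟩ := Dsum_bound hq0 hq1 hb
  have hid : ∀ j : ℕ, 1 ≤ j →
      Real.log |rhoSeq q β j| - (j:ℝ)*(Real.log j)^2/(2*Real.log q)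
      = (∑ l ∈ Icc 1 j, Dterm q (-β) l)
        + ((j:ℝ)*(Real.log j)^2 - ∑ l ∈ Icc 1 j, (Real.log l)^2)/(2*(-Real.log q)) := by
    intro j hj
    obtain ⟨hlog, -⟩ := rho_log hq0 hq1 hβ j
    rw [hlog]
    have hexpand : ∑ l ∈ Icc 1 j, Dterm q (-β) l
        = (∑ l ∈ Icc 1 j, (Real.log (-β) - Slog q ((l:ℝ)*(-β))))
          + (∑ l ∈ Icc 1 j, (Real.log l)^2)/(2*(-Real.log q)) := by
      simp only [Dterm]
      rw [Finset.sum_add_distrib, Finset.sum_div]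
    rw [hexpand]
    field_simp
    ring
  have herr : ∀ j : ℕ, 2 ≤ j →
      |Real.log |rhoSeq q β j| - (j:ℝ)*(Real.log j)^2/(2*Real.log q)|
      ≤ P + K₁*((j:ℝ)*Real.log j) + K₂*j + ((j:ℝ)*Real.log j)/(-Real.log q) := by
    intro j hj
    rw [hid j (by omega)]
    have h1 := hDsum j (by omega)
    have hsq_low := sum_sq_log_lower j (by omega)
    have hsq_up := sum_sq_log_upper j
    have hjl : 0 ≤ Real.log j := Real.log_nonneg (by exact_mod_cast (by omega : 1 ≤ j))
    have hj0 : (0:ℝ) ≤ j := Nat.cast_nonneg j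
    have h2 : |((j:ℝ)*(Real.log j)^2 - ∑ l ∈ Icc 1 j, (Real.log l)^2)/(2*(-Real.log q))|
        ≤ ((j:ℝ)*Real.log j)/(-Real.log q) := by
      rw [abs_div, abs_of_pos (by positivity : (0:ℝ) < 2*(-Real.log q))]
      have habs : |(j:ℝ)*(Real.log j)^2 - ∑ l ∈ Icc 1 j, (Real.log l)^2|
          ≤ 2*((j:ℝ)*Real.log j) := by
        rw [abs_le]
        constructor
        · nlinarith
        · nlinarith
      calc |(j:ℝ)*(Real.log j)^2 - ∑ l ∈ Icc 1 j, (Real.log l)^2| / (2*(-Real.log q))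
          ≤ (2*((j:ℝ)*Real.log j)) / (2*(-Real.log q)) := by gcongr
      _ = ((j:ℝ)*Real.log j)/(-Real.log q) := by
          rw [mul_div_mul_left _ _ (by norm_num : (2:ℝ) ≠ 0)]
    calc |(∑ l ∈ Icc 1 j, Dterm q (-β) l)
        + ((j:ℝ)*(Real.log j)^2 - ∑ l ∈ Icc 1 j, (Real.log l)^2)/(2*(-Real.log q))|
        ≤ |∑ l ∈ Icc 1 j, Dterm q (-β) l|
          + |((j:ℝ)*(Real.log j)^2 - ∑ l ∈ Icc 1 j, (Real.log l)^2)/(2*(-Real.log q))| :=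
          abs_add_le _ _
    _ ≤ (P + K₁*((j:ℝ)*Real.log j) + K₂*j) + ((j:ℝ)*Real.log j)/(-Real.log q) :=
          add_le_add h1 h2
    _ = P + K₁*((j:ℝ)*Real.log j) + K₂*j + ((j:ℝ)*Real.log j)/(-Real.log q) := by ring
  set C := P + K₁ + 2*K₂ + 1/(-Real.log q) + 1 with hC_def
  have hCpos : 0 < C := by
    have : 0 < 1/(-Real.log q) := by positivity
    rw [hC_def]; linarith
  have hCb : ∀ j : ℕ, 2 ≤ j →
      |Real.log |rhoSeq q β j| - (j:ℝ)*(Real.log j)^2/(2*Real.log q)|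
        ≤ C * ((j:ℝ) * Real.log j) := by
    intro j hj
    have h := herr j hj
    obtain ⟨hX1, hX2⟩ := jlog_bounds hj
    set X := (j:ℝ)*Real.log j with hX_def
    have e1 : P ≤ P * X := le_mul_of_one_le_right hP hX1
    have e2 : K₂ * (j:ℝ) ≤ K₂ * (2*X) := mul_le_mul_of_nonneg_left hX2 hK₂
    have e3 : X/(-Real.log q) = (1/(-Real.log q))*X := by ring
    have e4 : 0 < 1/(-Real.log q) := by positivity
    calc |Real.log |rhoSeq q β j| - (j:ℝ)*(Real.log j)^2/(2*Real.log q)|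
        ≤ P + K₁*X + K₂*(j:ℝ) + X/(-Real.log q) := h
    _ ≤ P*X + K₁*X + K₂*(2*X) + (1/(-Real.log q))*X := by
        rw [e3] at *
        linarith
    _ ≤ C * X := by
        rw [hC_def]
        nlinarith
  constructor
  · -- tendsto 0
    have hub : ∀ j : ℕ, 2 ≤ j → Real.log |rhoSeq q β j|
        ≤ (j:ℝ)*Real.log j*(C - Real.log j/(2*(-Real.log q))) := by
      intro j hj
      have h := (abs_le.mp (hCb j hj)).2
      have hident : (j:ℝ)*(Real.log j)^2/(2*Real.log q) + C*((j:ℝ)*Real.log j)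
          = (j:ℝ)*Real.log j*(C - Real.log j/(2*(-Real.log q))) := by
        field_simp
        ring
      linarith
    have hg : Tendsto (fun j : ℕ => (j:ℝ)*Real.log j*(C - Real.log j/(2*(-Real.log q))))
        atTop atBot := by
      apply Filter.Tendsto.atTop_mul_atBot₀
      · exact tendsto_natCast_atTop_atTop.atTop_mul_atTop₀
          (tendsto_log_atTop.comp tendsto_natCast_atTop_atTop)
      · have h1 : Tendsto (fun j : ℕ => Real.log j/(2*(-Real.log q))) atTop atTop :=
          (tendsto_log_atTop.comp tendsto_natCast_atTop_atTop).atTop_div_const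
            (by positivity)
        have h2 := tendsto_neg_atTop_atBot.comp h1
        have h3 := tendsto_atBot_add_const_left atTop C h2
        simpa [Function.comp, sub_eq_add_neg] using h3
    have hlogrho : Tendsto (fun j : ℕ => Real.log |rhoSeq q β j|) atTop atBot := by
      apply tendsto_atBot_mono' atTop ?_ hg
      filter_upwards [eventually_ge_atTop 2] with j hj using hub j hj
    have habs : Tendsto (fun j : ℕ => |rhoSeq q β j|) atTop (nhds 0) := by
      have heq : (fun j : ℕ => |rhoSeq q β j|)
          = fun j => Real.exp (Real.log |rhoSeq q β j|) := by
        funext j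
        rw [Real.exp_log (abs_pos.mpr (rho_log hq0 hq1 hβ j).2)]
      rw [heq]
      exact Real.tendsto_exp_atBot.comp hlogrho
    exact (tendsto_zero_iff_abs_tendsto_zero _).mpr habs
  · refine ⟨C, hCpos, fun j hj => ?_⟩
    calc |Real.log |rhoSeq q β j| - (j:ℝ)*(Real.log j)^2/(2*Real.log q)|
        ≤ C * ((j:ℝ) * Real.log j) := hCb j hj
    _ = C * (j:ℝ) * Real.log j := by ring
end

section
/- Let φ_k(x) = β x^{1-k} ∑_{j=0}^∞ (ρ_{j-k}/j!)(x/β)^j where ρ_i are defined from r_i = βH_q(iβ) by ρ_i = ρ_{i-1} r_i for all i ∈ ℤ, ρ_0 = 1. Then for every integer k, β(𝒟 + k - 1)φ_k = φ_{k-1}, where 𝒟 = x d/dx is the Euler operator. -/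
/-- `r_i = β H_q(iβ)`, `i ∈ ℤ`. -/
noncomputable def rcoef (q β : ℝ) (i : ℤ) : ℝ := β * Hq q ((i : ℝ) * β)

/-- `ρ_0 = 1`, `ρ_i = ρ_{i-1} r_i` for all `i ∈ ℤ`. -/
noncomputable def rho (q β : ℝ) (i : ℤ) : ℝ :=
  if 0 ≤ i then ∏ l ∈ Finset.Icc 1 i.toNat, rcoef q β (l : ℤ)
  else (∏ l ∈ Finset.range (-i).toNat, rcoef q β (-(l : ℤ)))⁻¹

/-- `φ_k(x) = β x^{1-k} ∑_{j≥0} (ρ_{j-k}/j!)(x/β)^j`. -/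
noncomputable def phi (q β : ℝ) (k : ℤ) (x : ℂ) : ℂ :=
  (β : ℂ) * x ^ (1 - k) *
    ∑' j : ℕ, ((rho q β ((j : ℤ) - k) / (j.factorial : ℝ) : ℝ) : ℂ) * (x / (β : ℂ)) ^ j

lemma aux_Hq_abs_le_one (q : ℝ) (hq0 : 0 < q) (y : ℝ) (hy : y ≤ 0) : |Hq q y| ≤ 1 := by
  have hfac : ∀ m : ℕ, 0 < (1 - q ^ m * y)⁻¹ ∧ (1 - q ^ m * y)⁻¹ ≤ 1 := by
    intro m
    have h1 : (0:ℝ) < q ^ m := pow_pos hq0 m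
    have h2 : q ^ m * y ≤ 0 := mul_nonpos_of_nonneg_of_nonpos h1.le hy
    have h3 : (1:ℝ) ≤ 1 - q ^ m * y := by linarith
    refine ⟨inv_pos.mpr (by linarith), ?_⟩
    rw [inv_le_one_iff₀]
    right; exact h3
  rw [Hq]
  by_cases h : Multipliable fun m : ℕ => (1 - q ^ m * y)⁻¹
  · have hp := h.hasProd
    have hub : (∏' m : ℕ, (1 - q ^ m * y)⁻¹) ≤ 1 :=
      le_of_tendsto' hp fun s =>
        Finset.prod_le_one (fun i _ => (hfac i).1.le) fun i _ => (hfac i).2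
    have hlb : (0:ℝ) ≤ ∏' m : ℕ, (1 - q ^ m * y)⁻¹ :=
      ge_of_tendsto' hp fun s => Finset.prod_nonneg fun i _ => (hfac i).1.le
    rw [abs_le]; constructor <;> linarith
  · rw [tprod_eq_one_of_not_multipliable h]; norm_num

lemma aux_rho_abs_le (q β : ℝ) (hq0 : 0 < q) (hβ : β < 0) (i : ℤ) (hi : 0 ≤ i) :
    |rho q β i| ≤ |β| ^ i.toNat := by
  rw [rho, if_pos hi, Finset.abs_prod]
  calc (∏ l ∈ Finset.Icc 1 i.toNat, |rcoef q β (l:ℤ)|)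
      ≤ ∏ _l ∈ Finset.Icc 1 i.toNat, |β| := by
        apply Finset.prod_le_prod (fun _ _ => abs_nonneg _)
        intro l _
        rw [rcoef, abs_mul]
        have hle : |Hq q (((l:ℤ):ℝ) * β)| ≤ 1 := by
          apply aux_Hq_abs_le_one q hq0
          apply mul_nonpos_of_nonneg_of_nonpos _ hβ.le
          push_cast; positivity
        calc |β| * |Hq q (((l:ℤ):ℝ) * β)| ≤ |β| * 1 :=
              mul_le_mul_of_nonneg_left hle (abs_nonneg β)
          _ = |β| := mul_one _
    _ = |β| ^ i.toNat := by rw [Finset.prod_const, Nat.card_Icc, Nat.add_sub_cancel]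

/-- The recursion `β (𝒟 + k - 1) φ_k = φ_{k-1}` where `𝒟 = x d/dx` is the Euler
operator, for every integer `k`. -/
theorem phi_euler_recursion (q β : ℝ) (hq0 : 0 < q) (hq1 : q < 1) (hβ : β < 0)
    (hgen : ∀ i : ℤ, Hq q ((i : ℝ) * β) ≠ 0) (k : ℤ) (x : ℂ) (hx : x ≠ 0) :
    (β : ℂ) * (x * deriv (phi q β k) x + ((k : ℂ) - 1) * phi q β k x)
      = phi q β (k - 1) x := by
  have hβ0 : β ≠ 0 := ne_of_lt hβ
  have hβc : (β : ℂ) ≠ 0 := by exact_mod_cast hβ0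
  have hb : (0:ℝ) < |β| := abs_pos.mpr hβ0
  -- coefficients and series terms
  set c : ℕ → ℝ := fun n => rho q β ((n : ℤ) - k) / (n.factorial : ℝ) with hc_def
  set g : ℕ → ℂ → ℂ := fun n y => ((c n : ℝ) : ℂ) * (y / (β : ℂ)) ^ n with hg_def
  set g' : ℕ → ℂ → ℂ :=
    fun n y => ((c n : ℝ) : ℂ) * ((n : ℂ) * (y / (β : ℂ)) ^ (n - 1) * (1 / (β : ℂ))) with hg'_def
  -- coefficient bound
  set C : ℝ := |β| ^ (-k) +
      ∑ j ∈ Finset.range k.toNat, |rho q β ((j : ℤ) - k)| * |β| ^ (-(j : ℤ)) with hC_def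
  have hCsum_nonneg : (0:ℝ) ≤ ∑ j ∈ Finset.range k.toNat,
      |rho q β ((j : ℤ) - k)| * |β| ^ (-(j : ℤ)) :=
    Finset.sum_nonneg fun j _ => mul_nonneg (abs_nonneg _) (zpow_nonneg hb.le _)
  have hrho_bound : ∀ n : ℕ, |rho q β ((n : ℤ) - k)| ≤ C * |β| ^ n := by
    intro n
    by_cases hnk : k ≤ (n : ℤ)
    · have h0 : (0:ℤ) ≤ (n : ℤ) - k := by linarith
      have h1 := aux_rho_abs_le q β hq0 hβ ((n:ℤ) - k) h0
      have h2 : |β| ^ ((n:ℤ) - k).toNat = |β| ^ (n : ℤ) * |β| ^ (-k) := by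
        rw [← zpow_natCast |β| ((n:ℤ) - k).toNat, Int.toNat_of_nonneg h0,
          zpow_sub₀ hb.ne', zpow_neg]
        ring
      have h3 : |β| ^ (n : ℤ) = |β| ^ n := zpow_natCast _ _
      have h4 : |β| ^ (-k) ≤ C := by rw [hC_def]; linarith
      calc |rho q β ((n : ℤ) - k)| ≤ |β| ^ ((n:ℤ) - k).toNat := h1
        _ = |β| ^ n * |β| ^ (-k) := by rw [h2, h3]
        _ ≤ |β| ^ n * C := mul_le_mul_of_nonneg_left h4 (pow_nonneg hb.le n)
        _ = C * |β| ^ n := mul_comm _ _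
    · have hn_lt : n < k.toNat := by omega
      have hterm : |rho q β ((n : ℤ) - k)| * |β| ^ (-(n : ℤ)) ≤ C := by
        rw [hC_def]
        have h5 : |rho q β ((n : ℤ) - k)| * |β| ^ (-(n : ℤ)) ≤
            ∑ j ∈ Finset.range k.toNat, |rho q β ((j : ℤ) - k)| * |β| ^ (-(j : ℤ)) :=
          Finset.single_le_sum (f := fun j : ℕ => |rho q β ((j:ℤ) - k)| * |β| ^ (-(j:ℤ)))
            (fun j _ => mul_nonneg (abs_nonneg _) (zpow_nonneg hb.le _))
            (Finset.mem_range.mpr hn_lt)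
        have h6 : (0:ℝ) < |β| ^ (-k) := zpow_pos hb _
        linarith
      have hinv : |β| ^ (-(n : ℤ)) * |β| ^ n = 1 := by
        rw [← zpow_natCast |β| n, ← zpow_add₀ hb.ne']
        simp
      have h7 := mul_le_mul_of_nonneg_right hterm (pow_nonneg hb.le n)
      calc |rho q β ((n : ℤ) - k)|
          = |rho q β ((n : ℤ) - k)| * (|β| ^ (-(n : ℤ)) * |β| ^ n) := by rw [hinv, mul_one]
        _ = |rho q β ((n : ℤ) - k)| * |β| ^ (-(n : ℤ)) * |β| ^ n := by ring
        _ ≤ C * |β| ^ n := h7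
  have hC_pos : 0 < C := by
    have h6 : (0:ℝ) < |β| ^ (-k) := zpow_pos hb _
    rw [hC_def]; linarith
  -- summable bound on derivatives
  set R : ℝ := ‖x‖ + 1 with hR_def
  have hR_pos : 0 < R := by positivity
  set u : ℕ → ℝ := fun n => C * ((n : ℝ) * R ^ (n - 1) / (n.factorial : ℝ)) with hu_def
  have hu : Summable u := by
    rw [← summable_nat_add_iff 1]
    have heq : (fun n => u (n + 1)) = fun n => C * (R ^ n / (n.factorial : ℝ)) := by
      funext n
      rw [hu_def]
      simp only [Nat.add_sub_cancel, Nat.factorial_succ, Nat.cast_mul]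
      have hfac : ((n.factorial : ℝ)) ≠ 0 := by positivity
      have hn1 : ((n:ℝ) + 1) ≠ 0 := by positivity
      push_cast
      field_simp
    rw [heq]
    exact (Real.summable_pow_div_factorial R).mul_left C
  -- termwise derivatives
  have hg : ∀ (n : ℕ) (y : ℂ), HasDerivAt (g n) (g' n y) y := by
    intro n y
    have h1 : HasDerivAt (fun z : ℂ => z / (β : ℂ)) (1 / (β : ℂ)) y :=
      (hasDerivAt_id y).div_const _
    exact (h1.pow n).const_mul _
  -- bound on derivatives on the ball
  have hg'_bound : ∀ (n : ℕ) (y : ℂ), y ∈ Metric.ball (0:ℂ) R → ‖g' n y‖ ≤ u n := by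
    intro n y hy
    have hy' : ‖y‖ ≤ R := by
      have := Metric.mem_ball.mp hy
      rw [dist_zero_right] at this
      linarith
    have hnorm : ‖g' n y‖ = |c n| * ((n : ℝ) * (‖y‖ / |β|) ^ (n - 1) * (1 / |β|)) := by
      rw [hg'_def]
      simp [norm_mul, norm_pow, norm_div, Complex.norm_real]
    have hcn : |c n| ≤ C * |β| ^ n / (n.factorial : ℝ) := by
      rw [hc_def]
      simp only [abs_div, Nat.abs_cast]
      apply div_le_div_of_nonneg_right
      · exact hrho_bound n
      · positivity
    rw [hnorm]
    calc |c n| * ((n : ℝ) * (‖y‖ / |β|) ^ (n - 1) * (1 / |β|))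
        ≤ (C * |β| ^ n / (n.factorial : ℝ)) * ((n : ℝ) * (R / |β|) ^ (n - 1) * (1 / |β|)) := by
          gcongr
      _ = u n := by
          rw [hu_def]
          cases n with
          | zero => simp
          | succ m =>
            simp only [Nat.add_sub_cancel]
            have h1 : ((m.factorial : ℝ)) ≠ 0 := by positivity
            have h2 : ((m:ℝ) + 1) ≠ 0 := by positivity
            rw [div_pow, pow_succ]
            push_cast
            field_simp
  -- summability at 0
  have hg0 : Summable fun n => g n (0:ℂ) := by
    apply summable_of_ne_finset_zero (s := ({0} : Finset ℕ))
    intro n hn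
    have hn0 : n ≠ 0 := by simpa using hn
    rw [hg_def]
    simp [zero_pow hn0]
  have hx_ball : x ∈ Metric.ball (0:ℂ) R := by
    rw [Metric.mem_ball, dist_zero_right, hR_def]; linarith
  have h0_ball : (0:ℂ) ∈ Metric.ball (0:ℂ) R := Metric.mem_ball_self hR_pos
  -- derivative of the series
  have hF : HasDerivAt (fun z => ∑' n, g n z) (∑' n, g' n x) x :=
    hasDerivAt_tsum_of_isPreconnected hu Metric.isOpen_ball
      (convex_ball (0:ℂ) R).isPreconnected (fun n y _ => hg n y) hg'_bound h0_ball hg0 hx_ball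
  have hsum' : Summable fun n => g' n x :=
    Summable.of_norm_bounded hu fun n => hg'_bound n x hx_ball
  -- derivative of phi
  have hrepr : phi q β k = fun y => ((β:ℂ) * y ^ (1 - k)) * ∑' n, g n y := rfl
  have hA : HasDerivAt (fun y : ℂ => (β:ℂ) * y ^ (1 - k))
      ((β:ℂ) * (((1 - k : ℤ) : ℂ) * x ^ (1 - k - 1))) x :=
    (hasDerivAt_zpow (1 - k) x (Or.inl hx)).const_mul _
  have hderiv : deriv (phi q β k) x =
      (β:ℂ) * (((1 - k : ℤ) : ℂ) * x ^ (1 - k - 1)) * (∑' n, g n x)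
        + ((β:ℂ) * x ^ (1 - k)) * (∑' n, g' n x) := by
    rw [hrepr]
    exact (hA.mul hF).deriv
  -- reindexing identity for the shifted series
  have key : (∑' n : ℕ, ((rho q β ((n : ℤ) - (k - 1)) / (n.factorial : ℝ) : ℝ) : ℂ)
        * (x / (β : ℂ)) ^ n) = (β:ℂ) * ∑' n, g' n x := by
    rw [← tsum_mul_left, Summable.tsum_eq_zero_add (hsum'.mul_left (β:ℂ))]
    have h0 : (β:ℂ) * g' 0 x = 0 := by rw [hg'_def]; simp
    rw [h0, zero_add]
    refine tsum_congr fun n => ?_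
    rw [hg'_def, hc_def]
    simp only [Nat.add_sub_cancel, Nat.factorial_succ]
    have harg : ((n + 1 : ℕ) : ℤ) - k = (n : ℤ) - (k - 1) := by push_cast; ring
    rw [harg]
    have hfac : ((n.factorial : ℂ)) ≠ 0 := Nat.cast_ne_zero.mpr n.factorial_ne_zero
    have hn1 : ((n : ℂ) + 1) ≠ 0 := by
      exact_mod_cast Nat.cast_ne_zero (R := ℂ) |>.mpr (Nat.succ_ne_zero n)
    push_cast
    field_simp [hβc, hfac, hn1]
  -- the shifted phi
  have hT : phi q β (k - 1) x = (β:ℂ) * x ^ (1 - (k - 1)) * ((β:ℂ) * ∑' n, g' n x) := by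
    rw [phi, key]
  -- final algebra
  have e1 : x * x ^ (1 - k - 1) = x ^ (1 - k) := by
    rw [mul_comm, ← zpow_add_one₀ hx]
    congr 1
    ring
  have e2 : x * x ^ (1 - k) = x ^ (1 - (k - 1)) := by
    rw [mul_comm, ← zpow_add_one₀ hx]
    congr 1
    ring
  rw [hderiv, hT, hrepr]
  simp only []
  rw [← e2, ← e1]
  push_cast
  ring
end

section
/- Andréief's identity: for integrable functions f₁,…,fₙ, g₁,…,gₙ on a measure space (C, dμ), one has (1/n!) ∫⋯∫ det(f_i(ζ_j))_{i,j} det(g_i(ζ_j))_{i,j} ∏_k dμ(ζ_k) = det(∫ f_i(ζ)g_j(ζ) dμ(ζ))_{i,j}. -/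
open MeasureTheory

private lemma andreief_perm_sum {n : ℕ} (A : Matrix (Fin n) (Fin n) ℂ) :
    ∑ σ : Equiv.Perm (Fin n), ∑ τ : Equiv.Perm (Fin n),
      (((Equiv.Perm.sign σ : ℤ) : ℂ) * ((Equiv.Perm.sign τ : ℤ) : ℂ)) * ∏ j, A (σ j) (τ j)
      = (n.factorial : ℂ) * A.det := by
  have h : ∀ σ : Equiv.Perm (Fin n),
      ∑ τ : Equiv.Perm (Fin n),
        (((Equiv.Perm.sign σ : ℤ) : ℂ) * ((Equiv.Perm.sign τ : ℤ) : ℂ)) * ∏ j, A (σ j) (τ j)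
        = A.det := by
    intro σ
    rw [← Equiv.sum_comp (Equiv.mulRight σ)
      (fun τ => (((Equiv.Perm.sign σ : ℤ) : ℂ) * ((Equiv.Perm.sign τ : ℤ) : ℂ))
        * ∏ j, A (σ j) (τ j))]
    have hs : ∀ π : Equiv.Perm (Fin n),
        (((Equiv.Perm.sign σ : ℤ) : ℂ) * ((Equiv.Perm.sign (π * σ) : ℤ) : ℂ))
          = ((Equiv.Perm.sign π : ℤ) : ℂ) := by
      intro π
      rw [Equiv.Perm.sign_mul]
      push_cast
      rcases Int.units_eq_one_or (Equiv.Perm.sign σ) with h1 | h1 <;> rw [h1] <;> push_cast <;> ring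
    have hp : ∀ π : Equiv.Perm (Fin n),
        (∏ j, A (σ j) ((π * σ) j)) = ∏ k, A k (π k) := by
      intro π
      simp only [Equiv.Perm.mul_apply]
      exact Equiv.prod_comp σ (fun k => A k (π k))
    simp only [Equiv.coe_mulRight, hs, hp]
    rw [← Matrix.det_transpose A, Matrix.det_apply']
    simp [Matrix.transpose_apply]
  rw [Finset.sum_congr rfl (fun σ _ => h σ), Finset.sum_const]
  simp [Fintype.card_perm, mul_comm]

/-- Andréief's identity: for functions `f₁,…,fₙ, g₁,…,gₙ` on a measure space `(C, μ)`
with all products `f_i g_j` integrable,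
`(1/n!) ∫⋯∫ det(f_i(ζ_j)) det(g_i(ζ_j)) ∏_k dμ(ζ_k) = det(∫ f_i g_j dμ)`. -/
theorem andreief_identity {C : Type*} [MeasurableSpace C] (μ : Measure C) [SigmaFinite μ]
    (n : ℕ) (f g : Fin n → C → ℂ)
    (hint : ∀ i j : Fin n, Integrable (fun ζ => f i ζ * g j ζ) μ) :
    (n.factorial : ℂ)⁻¹ *
        ∫ ζ : Fin n → C,
          Matrix.det (Matrix.of fun i j : Fin n => f i (ζ j)) *
            Matrix.det (Matrix.of fun i j : Fin n => g i (ζ j))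
          ∂(Measure.pi fun _ => μ)
      = Matrix.det (Matrix.of fun i j : Fin n => ∫ ζ, f i ζ * g j ζ ∂μ) := by
  letI : MeasureSpace C := ⟨μ⟩
  have hvol : (Measure.pi fun _ : Fin n => μ) = (volume : Measure (Fin n → C)) :=
    (MeasureTheory.volume_pi).symm
  set A : Matrix (Fin n) (Fin n) ℂ := Matrix.of fun i j : Fin n => ∫ ζ, f i ζ * g j ζ ∂μ with hA
  have hdet : ∀ ζ : Fin n → C,
      Matrix.det (Matrix.of fun i j : Fin n => f i (ζ j)) *
          Matrix.det (Matrix.of fun i j : Fin n => g i (ζ j))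
        = ∑ σ : Equiv.Perm (Fin n), ∑ τ : Equiv.Perm (Fin n),
            (((Equiv.Perm.sign σ : ℤ) : ℂ) * ((Equiv.Perm.sign τ : ℤ) : ℂ))
              * ∏ j, f (σ j) (ζ j) * g (τ j) (ζ j) := by
    intro ζ
    rw [Matrix.det_apply', Matrix.det_apply', Finset.sum_mul_sum]
    refine Finset.sum_congr rfl fun σ _ => Finset.sum_congr rfl fun τ _ => ?_
    rw [Finset.prod_mul_distrib]
    simp only [Matrix.of_apply]
    ring
  have hprod : ∀ σ τ : Equiv.Perm (Fin n),
      Integrable (fun ζ : Fin n → C => ∏ j, f (σ j) (ζ j) * g (τ j) (ζ j))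
        (Measure.pi fun _ : Fin n => μ) := by
    intro σ τ
    rw [hvol]
    exact Integrable.fintype_prod (f := fun j z => f (σ j) z * g (τ j) z)
      (fun j => hint (σ j) (τ j))
  have hval : ∀ σ τ : Equiv.Perm (Fin n),
      (∫ ζ : Fin n → C, ∏ j, f (σ j) (ζ j) * g (τ j) (ζ j) ∂(Measure.pi fun _ : Fin n => μ))
        = ∏ j, A (σ j) (τ j) := by
    intro σ τ
    rw [hvol]
    exact integral_fintype_prod_volume_eq_prod (ι := Fin n) (fun j z => f (σ j) z * g (τ j) z)
  have key : (∫ ζ : Fin n → C,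
      Matrix.det (Matrix.of fun i j : Fin n => f i (ζ j)) *
        Matrix.det (Matrix.of fun i j : Fin n => g i (ζ j)) ∂(Measure.pi fun _ : Fin n => μ))
      = (n.factorial : ℂ) * A.det := by
    simp_rw [hdet]
    rw [integral_finset_sum _ (fun σ _ => integrable_finset_sum _
      (fun τ _ => ((hprod σ τ).const_mul _)))]
    have : ∀ σ : Equiv.Perm (Fin n), (∫ ζ : Fin n → C, ∑ τ : Equiv.Perm (Fin n),
        (((Equiv.Perm.sign σ : ℤ) : ℂ) * ((Equiv.Perm.sign τ : ℤ) : ℂ))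
          * ∏ j, f (σ j) (ζ j) * g (τ j) (ζ j) ∂(Measure.pi fun _ : Fin n => μ))
        = ∑ τ : Equiv.Perm (Fin n),
            (((Equiv.Perm.sign σ : ℤ) : ℂ) * ((Equiv.Perm.sign τ : ℤ) : ℂ))
              * ∏ j, A (σ j) (τ j) := by
      intro σ
      rw [integral_finset_sum _ (fun τ _ => ((hprod σ τ).const_mul _))]
      exact Finset.sum_congr rfl fun τ _ => by rw [integral_const_mul, hval σ τ]
    rw [Finset.sum_congr rfl (fun σ _ => this σ)]
    exact andreief_perm_sum A
  rw [key, ← mul_assoc, inv_mul_cancel₀ (by exact_mod_cast Nat.factorial_ne_zero n), one_mul]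
end

section
/- For 0 ≤ t, one has 0 < 1/2 − 1/t + 1/(e^t − 1) ≤ t/12 for all t > 0 (with the convention that the expression extends continuously to 0 at t = 0). -/
open Real Set

/-- Generic helper: f 0 = 0 and f' > 0 on (0,∞) gives f t > 0 for t > 0. -/
lemma aux_pos {f f' : ℝ → ℝ} (hf : ∀ x, HasDerivAt f (f' x) x) (h0 : f 0 = 0)
    (hpos : ∀ x, 0 < x → 0 < f' x) {t : ℝ} (ht : 0 < t) : 0 < f t := by
  have hmono : StrictMonoOn f (Ici (0:ℝ)) := by
    apply strictMonoOn_of_deriv_pos (convex_Ici 0)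
    · exact fun x _ => (hf x).continuousAt.continuousWithinAt
    · intro x hx
      rw [interior_Ici] at hx
      rw [(hf x).deriv]
      exact hpos x hx
  have := hmono (self_mem_Ici) (le_of_lt ht : (0:ℝ) ≤ t) ht
  linarith [h0 ▸ this]

/-- Generic helper: f 0 = 0 and f' ≥ 0 on (0,∞) gives f t ≥ 0 for t ≥ 0. -/
lemma aux_nonneg {f f' : ℝ → ℝ} (hf : ∀ x, HasDerivAt f (f' x) x) (h0 : f 0 = 0)
    (hpos : ∀ x, 0 < x → 0 ≤ f' x) {t : ℝ} (ht : 0 ≤ t) : 0 ≤ f t := by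
  have hmono : MonotoneOn f (Ici (0:ℝ)) := by
    apply monotoneOn_of_deriv_nonneg (convex_Ici 0)
    · exact fun x _ => (hf x).continuousAt.continuousWithinAt
    · intro x hx
      rw [interior_Ici] at hx
      exact ((hf x).differentiableAt).differentiableWithinAt
    · intro x hx
      rw [interior_Ici] at hx
      rw [(hf x).deriv]
      exact hpos x hx
  have := hmono (self_mem_Ici) (ht : (0:ℝ) ≤ t) ht
  linarith [h0 ▸ this]

lemma g1_pos {t : ℝ} (ht : 0 < t) : 0 < (t - 1) * Real.exp t + 1 := by
  have := aux_pos (f := fun x => (x - 1) * Real.exp x + 1)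
    (f' := fun x => x * Real.exp x) ?_ (by norm_num) ?_ ht
  · simpa using this
  · intro x
    have h : HasDerivAt (fun x : ℝ => (x - 1) * Real.exp x + 1)
        (1 * Real.exp x + (x - 1) * Real.exp x) x := by
      exact (((hasDerivAt_id x).sub_const 1).mul (Real.hasDerivAt_exp x)).add_const 1
    convert h using 1; ring
  · intro x hx
    positivity

lemma g0_pos {t : ℝ} (ht : 0 < t) : 0 < (t - 2) * Real.exp t + 2 + t := by
  have := aux_pos (f := fun x => (x - 2) * Real.exp x + 2 + x)
    (f' := fun x => (x - 1) * Real.exp x + 1) ?_ (by norm_num) ?_ ht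
  · simpa using this
  · intro x
    have h : HasDerivAt (fun x : ℝ => (x - 2) * Real.exp x + 2 + x)
        (1 * Real.exp x + (x - 2) * Real.exp x + 1) x := by
      exact ((((hasDerivAt_id x).sub_const 2).mul (Real.hasDerivAt_exp x)).add_const 2).add
        (hasDerivAt_id x)
    convert h using 1; ring
  · intro x hx
    exact g1_pos hx

lemma h2_nonneg {t : ℝ} (ht : 0 ≤ t) : 0 ≤ (t ^ 2 - 2 * t + 2) * Real.exp t - 2 := by
  have := aux_nonneg (f := fun x => (x ^ 2 - 2 * x + 2) * Real.exp x - 2)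
    (f' := fun x => x ^ 2 * Real.exp x) ?_ (by norm_num) ?_ ht
  · simpa using this
  · intro x
    have hp : HasDerivAt (fun x : ℝ => x ^ 2 - 2 * x + 2) (2 * x - 2) x := by
      have := ((hasDerivAt_pow 2 x).sub ((hasDerivAt_id x).const_mul 2)).add_const 2
      exact this.congr_deriv (by ring)
    have h := (hp.mul (Real.hasDerivAt_exp x)).sub_const 2
    exact h.congr_deriv (by ring)
  · intro x hx
    positivity

lemma h1_nonneg {t : ℝ} (ht : 0 ≤ t) : 0 ≤ (t ^ 2 - 4 * t + 6) * Real.exp t - 2 * t - 6 := by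
  have := aux_nonneg (f := fun x => (x ^ 2 - 4 * x + 6) * Real.exp x - 2 * x - 6)
    (f' := fun x => (x ^ 2 - 2 * x + 2) * Real.exp x - 2) ?_ (by norm_num) ?_ ht
  · simpa using this
  · intro x
    have hp : HasDerivAt (fun x : ℝ => x ^ 2 - 4 * x + 6) (2 * x - 4) x := by
      have := ((hasDerivAt_pow 2 x).sub ((hasDerivAt_id x).const_mul 4)).add_const 6
      exact this.congr_deriv (by ring)
    have h := ((hp.mul (Real.hasDerivAt_exp x)).sub ((hasDerivAt_id x).const_mul 2)).sub_const 6
    exact h.congr_deriv (by ring)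
  · intro x hx
    exact h2_nonneg hx.le

lemma h0_nonneg {t : ℝ} (ht : 0 ≤ t) :
    0 ≤ (t ^ 2 - 6 * t + 12) * Real.exp t - t ^ 2 - 6 * t - 12 := by
  have := aux_nonneg (f := fun x => (x ^ 2 - 6 * x + 12) * Real.exp x - x ^ 2 - 6 * x - 12)
    (f' := fun x => (x ^ 2 - 4 * x + 6) * Real.exp x - 2 * x - 6) ?_ (by norm_num) ?_ ht
  · simpa using this
  · intro x
    have hp : HasDerivAt (fun x : ℝ => x ^ 2 - 6 * x + 12) (2 * x - 6) x := by
      have := ((hasDerivAt_pow 2 x).sub ((hasDerivAt_id x).const_mul 6)).add_const 12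
      exact this.congr_deriv (by ring)
    have h := (((hp.mul (Real.hasDerivAt_exp x)).sub (hasDerivAt_pow 2 x)).sub
      ((hasDerivAt_id x).const_mul 6)).sub_const 12
    exact h.congr_deriv (by ring)
  · intro x hx
    exact h1_nonneg hx.le

/-- The elementary Binet-kernel inequality: for all `t > 0`,
`0 < 1/2 - 1/t + 1/(e^t - 1) ≤ t/12`. -/
theorem binet_kernel_bound (t : ℝ) (ht : 0 < t) :
    0 < 1 / 2 - 1 / t + 1 / (Real.exp t - 1) ∧
      1 / 2 - 1 / t + 1 / (Real.exp t - 1) ≤ t / 12 := by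
  have hE : 0 < Real.exp t - 1 := by
    have := Real.add_one_lt_exp (ne_of_gt ht)
    linarith
  have hEt : Real.exp t = (Real.exp t - 1) + 1 := by ring
  constructor
  · have key : 1 / 2 - 1 / t + 1 / (Real.exp t - 1) =
        ((t - 2) * Real.exp t + 2 + t) / (2 * t * (Real.exp t - 1)) := by
      field_simp
      ring
    rw [key]
    exact div_pos (g0_pos ht) (by positivity)
  · have key : t / 12 - (1 / 2 - 1 / t + 1 / (Real.exp t - 1)) =
        ((t ^ 2 - 6 * t + 12) * Real.exp t - t ^ 2 - 6 * t - 12) /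
          (12 * t * (Real.exp t - 1)) := by
      field_simp
      ring
    have h := div_nonneg (h0_nonneg ht.le) (by positivity : (0:ℝ) ≤ 12 * t * (Real.exp t - 1))
    linarith [key ▸ h]
end

section
/- The closed-form evaluation: for q ∈ (0,1), β < 0, and real z > 0, ∫_0^∞ [β^{-1}q^{-ζ} log(1 − zβq^ζ) + z] dζ = (z/log q)·(1 − (1 − 1/(βz)) log(1 − βz)). -/
open Real Filter MeasureTheory Set Topology

/-- Closed-form evaluation: for `0 < q < 1`, `β < 0`, `z > 0`,
`∫_0^∞ [β⁻¹ q^{-ζ} log(1 - zβq^ζ) + z] dζ = (z/log q)(1 - (1 - 1/(βz)) log(1 - βz))`. -/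
theorem integral_log_Hq_leading (q β z : ℝ) (hq0 : 0 < q) (hq1 : q < 1)
    (hβ : β < 0) (hz : 0 < z) :
    ∫ ζ in Set.Ioi (0 : ℝ),
        (β⁻¹ * q ^ (-ζ) * Real.log (1 - z * β * q ^ ζ) + z)
      = z / Real.log q * (1 - (1 - 1 / (β * z)) * Real.log (1 - β * z)) := by
  have hL : Real.log q < 0 := Real.log_neg hq0 hq1
  have hLne : Real.log q ≠ 0 := hL.ne
  have hβne : β ≠ 0 := hβ.ne
  set L := Real.log q with hLdef
  -- antiderivative
  set F : ℝ → ℝ := fun ζ => (z * β - q ^ (-ζ)) * Real.log (1 - z * β * q ^ ζ) / (β * L)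
    with hF
  have hpos : ∀ ζ : ℝ, 0 < 1 - z * β * q ^ ζ := by
    intro ζ
    have : z * β * q ^ ζ < 0 :=
      mul_neg_of_neg_of_pos (mul_neg_of_pos_of_neg hz hβ) (Real.rpow_pos_of_pos hq0 ζ)
    linarith
  have hderiv : ∀ ζ : ℝ,
      HasDerivAt F (β⁻¹ * q ^ (-ζ) * Real.log (1 - z * β * q ^ ζ) + z) ζ := by
    intro ζ
    have hA : HasDerivAt (fun x : ℝ => q ^ x) (q ^ ζ * L) ζ :=
      (Real.hasStrictDerivAt_const_rpow hq0 ζ).hasDerivAt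
    have hB : HasDerivAt (fun x : ℝ => q ^ (-x)) (q ^ (-ζ) * L * (-1)) ζ := by
      have := ((Real.hasStrictDerivAt_const_rpow hq0 (-ζ)).hasDerivAt).comp ζ
        ((hasDerivAt_id ζ).neg)
      simpa [Function.comp_def] using this
    have hin : HasDerivAt (fun x : ℝ => 1 - z * β * q ^ x) (-(z * β * (q ^ ζ * L))) ζ := by
      simpa using ((hA.const_mul (z * β)).const_sub 1)
    have hlog : HasDerivAt (fun x : ℝ => Real.log (1 - z * β * q ^ x))
        ((1 - z * β * q ^ ζ)⁻¹ * -(z * β * (q ^ ζ * L))) ζ :=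
      by have := (Real.hasDerivAt_log (hpos ζ).ne').comp ζ hin; exact this
    have hmul : HasDerivAt (fun x : ℝ => (z * β - q ^ (-x)) * Real.log (1 - z * β * q ^ x))
        ((0 - q ^ (-ζ) * L * (-1)) * Real.log (1 - z * β * q ^ ζ) +
          (z * β - q ^ (-ζ)) * ((1 - z * β * q ^ ζ)⁻¹ * -(z * β * (q ^ ζ * L)))) ζ :=
      (((hasDerivAt_const ζ (z * β)).sub hB)).mul hlog
    have := hmul.div_const (β * L)
    refine this.congr_deriv ?_
    have hABinv : q ^ (-ζ) = (q ^ ζ)⁻¹ := Real.rpow_neg hq0.le ζ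
    have hne := (hpos ζ).ne'
    have hqz : (q : ℝ) ^ ζ ≠ 0 := (Real.rpow_pos_of_pos hq0 ζ).ne'
    rw [hABinv]
    field_simp
    have hne2 : 1 - q ^ ζ * z * β ≠ 0 := by
      rw [show 1 - q ^ ζ * z * β = 1 - z * β * q ^ ζ by ring]; exact hne
    linear_combination (q ^ ζ * L * z * β) * (mul_inv_cancel₀ hne2)
  -- nonnegativity of the integrand
  have hnn : ∀ ζ ∈ Ioi (0:ℝ), 0 ≤ β⁻¹ * q ^ (-ζ) * Real.log (1 - z * β * q ^ ζ) + z := by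
    intro ζ _
    have hqz : (0:ℝ) < q ^ ζ := Real.rpow_pos_of_pos hq0 ζ
    have hqnz : (0:ℝ) < q ^ (-ζ) := Real.rpow_pos_of_pos hq0 (-ζ)
    have hlog_le : Real.log (1 - z * β * q ^ ζ) ≤ -(z * β * q ^ ζ) := by
      have := Real.log_le_sub_one_of_pos (hpos ζ)
      linarith
    have hcoef : β⁻¹ * q ^ (-ζ) < 0 := mul_neg_of_neg_of_pos (inv_lt_zero.mpr hβ) hqnz
    have h1 : β⁻¹ * q ^ (-ζ) * Real.log (1 - z * β * q ^ ζ)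
        ≥ β⁻¹ * q ^ (-ζ) * (-(z * β * q ^ ζ)) :=
      mul_le_mul_of_nonpos_left hlog_le hcoef.le
    have h2 : β⁻¹ * q ^ (-ζ) * (-(z * β * q ^ ζ)) = -z := by
      rw [Real.rpow_neg hq0.le]
      field_simp
    linarith [h2 ▸ h1]
  -- limit at infinity
  have htend : Tendsto F atTop (𝓝 (z / L)) := by
    have hq_to0 : Tendsto (fun ζ : ℝ => q ^ ζ) atTop (𝓝 0) :=
      tendsto_rpow_atTop_of_base_lt_one q (by linarith) hq1
    have hq_to0' : Tendsto (fun ζ : ℝ => q ^ ζ) atTop (𝓝[≠] 0) :=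
      tendsto_nhdsWithin_of_tendsto_nhds_of_eventually_within _ hq_to0
        (Eventually.of_forall fun ζ => (Real.rpow_pos_of_pos hq0 ζ).ne')
    -- slope of t ↦ log (1 - zβ t) at 0 tends to -zβ
    have hd0 : HasDerivAt (fun t : ℝ => Real.log (1 - z * β * t)) (-(z * β)) 0 := by
      have hin : HasDerivAt (fun t : ℝ => 1 - z * β * t) (-(z * β)) 0 := by
        simpa using ((hasDerivAt_id (0:ℝ)).const_mul (z * β)).const_sub 1
      have := (Real.hasDerivAt_log (by norm_num : (1:ℝ) - z * β * 0 ≠ 0)).comp 0 hin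
      simpa [Function.comp_def] using this
    have hslope : Tendsto (fun t : ℝ => Real.log (1 - z * β * t) / t) (𝓝[≠] 0)
        (𝓝 (-(z * β))) := by
      have := hasDerivAt_iff_tendsto_slope.mp hd0
      refine this.congr' ?_
      filter_upwards [self_mem_nhdsWithin] with t ht
      simp [slope_def_field, div_eq_iff (show t ≠ 0 from ht)]
    have h1 : Tendsto (fun ζ : ℝ => Real.log (1 - z * β * q ^ ζ) / q ^ ζ) atTop
        (𝓝 (-(z * β))) := hslope.comp hq_to0'
    have h2 : Tendsto (fun ζ : ℝ => Real.log (1 - z * β * q ^ ζ)) atTop (𝓝 0) := by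
      have : Tendsto (fun t : ℝ => Real.log (1 - z * β * t)) (𝓝 0) (𝓝 0) := by
        have hc : ContinuousAt (fun t : ℝ => Real.log (1 - z * β * t)) 0 :=
          hd0.continuousAt
        simpa using hc.tendsto
      exact this.comp hq_to0
    have key : Tendsto (fun ζ : ℝ =>
        (z * β * Real.log (1 - z * β * q ^ ζ) - Real.log (1 - z * β * q ^ ζ) / q ^ ζ) / (β * L))
        atTop (𝓝 ((z * β * 0 - -(z * β)) / (β * L))) :=
      (((h2.const_mul (z * β)).sub h1)).div_const (β * L)
    have heq : ∀ ζ : ℝ,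
        (z * β * Real.log (1 - z * β * q ^ ζ) - Real.log (1 - z * β * q ^ ζ) / q ^ ζ) / (β * L)
          = F ζ := by
      intro ζ
      have hqz : (q : ℝ) ^ ζ ≠ 0 := (Real.rpow_pos_of_pos hq0 ζ).ne'
      have hAB : q ^ (-ζ) = (q ^ ζ)⁻¹ := by
        rw [Real.rpow_neg hq0.le]
      simp only [hF, hAB]
      field_simp
    have : ((z * β * 0 - -(z * β)) / (β * L)) = z / L := by
      field_simp
      ring
    rw [← this]
    exact key.congr heq
  have hint := integral_Ioi_of_hasDerivAt_of_nonneg' (g := F)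
    (fun x _ => hderiv x) hnn htend
  rw [hint]
  have hF0 : F 0 = (z * β - 1) * Real.log (1 - z * β) / (β * L) := by
    simp [hF, Real.rpow_zero]
  rw [hF0]
  rw [show (1:ℝ) - β * z = 1 - z * β by ring]
  field_simp
end
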